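/- arXiv:math/0410550 — 3 statements merged into one kernel-verified Lean document; each statement's English description precedes it below -/
import Mathlib

section
/- For all 0 ≤ k ≤ n, the Fibonomial coefficient C_F(n,k) = F_n! / (F_k! · F_{n−k}!) is a positive integer, where F_m! = F_m · F_{m−1} · ... · F_1 and F_0! = 1. -/
/-- The F-factorial `n_F! = F_n · F_{n-1} ⋯ F_1`, with `0_F! = 1`. -/
def ffact (n : ℕ) : ℕ := ∏ i ∈ Finset.Icc 1 n, Nat.fib i

lemma ffact_succ (n : ℕ) : ffact (n + 1) = Nat.fib (n + 1) * ffact n := by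
  rw [ffact, ffact, Finset.prod_Icc_succ_top (by omega), mul_comm]

lemma ffact_pos (n : ℕ) : 0 < ffact n := by
  apply Finset.prod_pos
  intro i hi
  exact Nat.fib_pos.2 (by simp [Finset.mem_Icc] at hi; omega)

lemma ffact_mul_dvd : ∀ (s a b : ℕ), a + b = s → ffact a * ffact b ∣ ffact (a + b) := by
  intro s
  induction s using Nat.strong_induction_on with
  | _ s ih =>
    intro a b hs
    match a, b with
    | 0, b => simp [ffact]
    | a + 1, 0 => simp [ffact]
    | a + 1, b + 1 =>
      have key : Nat.fib (a + 1 + (b + 1)) =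
          Nat.fib a * Nat.fib (b + 1) + Nat.fib (a + 1) * Nat.fib (b + 2) := by
        have := Nat.fib_add a (b + 1)
        convert this using 2 <;> omega
      have h1 : ffact (a + 1 + (b + 1)) = Nat.fib (a + 1 + (b + 1)) * ffact (a + b + 1) := by
        have : a + 1 + (b + 1) = (a + b + 1) + 1 := by omega
        rw [this, ffact_succ]
      rw [h1, key, add_mul]
      apply dvd_add
      · -- term: fib a * fib (b+1) * ffact (a+b+1)
        have ihab : ffact (a + 1) * ffact b ∣ ffact (a + 1 + b) :=
          ih (a + 1 + b) (by omega) (a + 1) b rfl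
        have : ffact (a + 1) * ffact (b + 1) ∣ Nat.fib (b + 1) * ffact (a + b + 1) := by
          have : a + 1 + b = a + b + 1 := by omega
          rw [this] at ihab
          calc ffact (a + 1) * ffact (b + 1)
              = Nat.fib (b + 1) * (ffact (a + 1) * ffact b) := by
                rw [ffact_succ b]; ring
            _ ∣ Nat.fib (b + 1) * ffact (a + b + 1) := mul_dvd_mul_left _ ihab
        calc ffact (a + 1) * ffact (b + 1)
            ∣ Nat.fib (b + 1) * ffact (a + b + 1) := this
          _ ∣ Nat.fib a * Nat.fib (b + 1) * ffact (a + b + 1) := by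
              rw [mul_assoc]; exact dvd_mul_left _ _
      · -- term: fib (a+1) * fib (b+2) * ffact (a+b+1)
        have ihab : ffact a * ffact (b + 1) ∣ ffact (a + (b + 1)) :=
          ih (a + (b + 1)) (by omega) a (b + 1) rfl
        have h2 : ffact (a + 1) * ffact (b + 1) ∣ Nat.fib (a + 1) * ffact (a + b + 1) := by
          have : a + (b + 1) = a + b + 1 := by omega
          rw [this] at ihab
          calc ffact (a + 1) * ffact (b + 1)
              = Nat.fib (a + 1) * (ffact a * ffact (b + 1)) := by
                rw [ffact_succ a]; ring
            _ ∣ Nat.fib (a + 1) * ffact (a + b + 1) := mul_dvd_mul_left _ ihab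
        calc ffact (a + 1) * ffact (b + 1)
            ∣ Nat.fib (a + 1) * ffact (a + b + 1) := h2
          _ ∣ Nat.fib (a + 1) * Nat.fib (b + 2) * ffact (a + b + 1) := by
              rw [mul_assoc, mul_comm (Nat.fib (b + 2)) _, ← mul_assoc]
              exact dvd_mul_right _ _

theorem fibonomial_int (n k : ℕ) (hk : k ≤ n) :
    ∃ m : ℕ, 0 < m ∧ ffact n = m * (ffact k * ffact (n - k)) := by
  have hdvd : ffact k * ffact (n - k) ∣ ffact n := by
    have := ffact_mul_dvd (k + (n - k)) k (n - k) rfl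
    rwa [Nat.add_sub_cancel' hk] at this
  obtain ⟨m, hm⟩ := hdvd
  refine ⟨m, ?_, by rw [hm]; ring⟩
  rcases Nat.eq_zero_or_pos m with h | h
  · subst h; simp at hm; exact absurd hm (ffact_pos n).ne'
  · exact h
end

section
/- In the Fibonacci cobweb poset, if x belongs to level k and y belongs to level n with n > k+1, then the Möbius function satisfies μ(x,y) = −∏_{l=k+1}^{n−1} (1 − F_l), where F_l is the l-th Fibonacci number. -/
open Finset

/-- Telescoping identity: `1 - ∑ fib m · ∏(1-fib) = ∏(1-fib)`. -/
lemma fib_prod_sum (k : ℕ) : ∀ d : ℕ,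
    (1 : ℤ) - ∑ m ∈ Icc (k + 1) (k + d),
      (Nat.fib m : ℤ) * ∏ l ∈ Icc (k + 1) (m - 1), (1 - (Nat.fib l : ℤ))
    = ∏ l ∈ Icc (k + 1) (k + d), (1 - (Nat.fib l : ℤ)) := by
  intro d
  induction d with
  | zero => simp
  | succ d ih =>
    have h : k + 1 ≤ k + d + 1 := by omega
    rw [show k + (d + 1) = (k + d) + 1 from rfl,
        Finset.sum_Icc_succ_top h, Finset.prod_Icc_succ_top h,
        show k + d + 1 - 1 = k + d from by omega]
    linear_combination ih

/-- In the Fibonacci cobweb poset (positive integers, level `l` being the interval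
`[F_{l+1}, F_{l+2}-1]` of cardinality `F_l`, with `x ≤ y` iff `x = y` or
`level x < level y`), the Möbius function on a pair `(x, y)` with `x` at level `k`
and `y` at level `n`, `n > k + 1`, equals `-∏_{l=k+1}^{n-1} (1 - F_l)`. -/
theorem cobweb_mu_general
    (lvl : ℕ → ℕ)
    (hlvl : ∀ x : ℕ, 1 ≤ x →
      Nat.fib (lvl x + 1) ≤ x ∧ x ≤ Nat.fib (lvl x + 2) - 1)
    (μ : ℕ → ℕ → ℤ)
    (hdiag : ∀ x, μ x x = 1)
    (hrec : ∀ x y, 1 ≤ x → 1 ≤ y → (x = y ∨ lvl x < lvl y) → x ≠ y →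
      μ x y = -∑ z ∈ (Finset.Ico 1 y).filter
        (fun z => (x = z ∨ lvl x < lvl z) ∧ (z = y ∨ lvl z < lvl y) ∧ z ≠ y), μ x z)
    (x y k n : ℕ) (hx : 1 ≤ x) (hy : 1 ≤ y) (hk : 1 ≤ k)
    (hxk : lvl x = k) (hyn : lvl y = n) (hkn : k + 1 < n) :
    μ x y = -∏ l ∈ Finset.Icc (k + 1) (n - 1), (1 - (Nat.fib l : ℤ)) := by
  -- comparable in the poset implies numerically smaller
  have hlt : ∀ a b : ℕ, 1 ≤ a → 1 ≤ b → lvl a < lvl b → a < b := by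
    intro a b ha hb h
    obtain ⟨ha1, ha2⟩ := hlvl a ha
    obtain ⟨hb1, hb2⟩ := hlvl b hb
    have h1 : Nat.fib (lvl a + 2) ≤ Nat.fib (lvl b + 1) := Nat.fib_mono (by omega)
    omega
  -- membership in the fib-interval determines the level
  have hlvl_eq : ∀ z m : ℕ, 1 ≤ z → Nat.fib (m + 1) ≤ z → z < Nat.fib (m + 2) →
      lvl z = m := by
    intro z m hz h1 h2
    by_contra hne
    obtain ⟨hz1, hz2⟩ := hlvl z hz
    rcases Nat.lt_or_ge (lvl z) m with h | h
    · have := Nat.fib_mono (show lvl z + 2 ≤ m + 1 by omega)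
      omega
    · have := Nat.fib_mono (show m + 2 ≤ lvl z + 1 by omega)
      omega
  suffices H : ∀ N, ∀ Y, 1 ≤ Y → lvl Y = N → k < N →
      μ x Y = -∏ l ∈ Finset.Icc (k + 1) (N - 1), (1 - (Nat.fib l : ℤ)) by
    exact H n y hy hyn (by omega)
  intro N
  induction N using Nat.strong_induction_on with
  | _ N IH =>
    intro Y hY hYN hkN
    have hxY : lvl x < lvl Y := by rw [hxk, hYN]; exact hkN
    have hxltY : x < Y := hlt x Y hx hY hxY
    rw [hrec x Y hx hY (Or.inr hxY) (Nat.ne_of_lt hxltY)]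
    have hset : (Finset.Ico 1 Y).filter
        (fun z => (x = z ∨ lvl x < lvl z) ∧ (z = Y ∨ lvl z < lvl Y) ∧ z ≠ Y)
        = insert x ((Icc (k + 1) (N - 1)).biUnion
            (fun m => Finset.Ico (Nat.fib (m + 1)) (Nat.fib (m + 2)))) := by
      ext z
      simp only [mem_filter, mem_Ico, mem_insert, mem_biUnion, mem_Icc]
      constructor
      · rintro ⟨⟨hz1, hz2⟩, hxz, hzY, hne⟩
        rcases hxz with hxz | hxz
        · exact Or.inl hxz.symm
        · have hzN : lvl z < N := by
            rcases hzY with rfl | h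
            · exact absurd rfl hne
            · rwa [hYN] at h
          right
          obtain ⟨h1, h2⟩ := hlvl z hz1
          exact ⟨lvl z, ⟨by omega, by omega⟩, h1, by omega⟩
      · rintro (rfl | ⟨m, ⟨hm1, hm2⟩, h1, h2⟩)
        · exact ⟨⟨hx, hxltY⟩, Or.inl rfl, Or.inr hxY, Nat.ne_of_lt hxltY⟩
        · have hz : 1 ≤ z := le_trans (Nat.fib_pos.mpr (by omega)) h1
          have hm : lvl z = m := hlvl_eq z m hz h1 h2
          have hzY : lvl z < lvl Y := by rw [hm, hYN]; omega
          have hlt' := hlt z Y hz hY hzY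
          exact ⟨⟨hz, hlt'⟩, Or.inr (by rw [hxk, hm]; omega), Or.inr hzY,
            Nat.ne_of_lt hlt'⟩
    have hxnot : x ∉ (Icc (k + 1) (N - 1)).biUnion
        (fun m => Finset.Ico (Nat.fib (m + 1)) (Nat.fib (m + 2))) := by
      simp only [mem_biUnion, mem_Icc, mem_Ico]
      rintro ⟨m, ⟨hm1, hm2⟩, h1, h2⟩
      have := hlvl_eq x m hx h1 h2
      omega
    have hdisj : (↑(Icc (k + 1) (N - 1)) : Set ℕ).PairwiseDisjoint
        (fun m => Finset.Ico (Nat.fib (m + 1)) (Nat.fib (m + 2))) := by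
      intro a _ b _ hab
      apply Finset.disjoint_left.mpr
      intro z hza hzb
      simp only [mem_Ico] at hza hzb
      rcases Nat.lt_or_ge a b with h | h
      · have := Nat.fib_mono (show a + 2 ≤ b + 1 by omega)
        omega
      · have := Nat.fib_mono (show b + 2 ≤ a + 1 by omega)
        omega
    rw [hset, Finset.sum_insert hxnot, hdiag, Finset.sum_biUnion hdisj]
    have heach : ∀ m ∈ Icc (k + 1) (N - 1),
        ∑ z ∈ Finset.Ico (Nat.fib (m + 1)) (Nat.fib (m + 2)), μ x z
        = -((Nat.fib m : ℤ) * ∏ l ∈ Icc (k + 1) (m - 1), (1 - (Nat.fib l : ℤ))) := by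
      intro m hm
      simp only [mem_Icc] at hm
      have heq : ∀ z ∈ Finset.Ico (Nat.fib (m + 1)) (Nat.fib (m + 2)),
          μ x z = -∏ l ∈ Icc (k + 1) (m - 1), (1 - (Nat.fib l : ℤ)) := by
        intro z hz
        simp only [mem_Ico] at hz
        have hz1 : 1 ≤ z := le_trans (Nat.fib_pos.mpr (by omega)) hz.1
        have hlz : lvl z = m := hlvl_eq z m hz1 hz.1 hz.2
        exact IH m (by omega) z hz1 hlz (by omega)
      rw [Finset.sum_congr rfl heq, Finset.sum_const, Nat.card_Ico,
          show Nat.fib (m + 2) - Nat.fib (m + 1) = Nat.fib m from by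
            rw [Nat.fib_add_two]; omega]
      ring
    rw [Finset.sum_congr rfl heach, Finset.sum_neg_distrib]
    have harith := fib_prod_sum k (N - 1 - k)
    rw [show k + (N - 1 - k) = N - 1 from by omega] at harith
    linear_combination -harith
end

section
/- The Hermite F-polynomial H_{n,F}(x) = ∑_{k≥0} ((−a)^k / (2^k F_k!)) · n_F^{\underline{2k}} · x^{n−2k} satisfies ∂_F H_{n,F}(x) = F_n · H_{n−1,F}(x) for all n ≥ 1, where ∂_F(x^m) = F_m x^{m−1}. -/
open Polynomial

/-- The F-factorial as an element of `K`. -/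
noncomputable def ffactK (K : Type*) [Field K] (k : ℕ) : K :=
  ∏ i ∈ Finset.Icc 1 k, (Nat.fib i : K)

/-- The F-falling factorial `n_F^{\underline{j}} = F_n F_{n-1} ⋯ F_{n-j+1}`
(zero when `j > n`), as an element of `K`. -/
noncomputable def ffallK (K : Type*) [Field K] (n j : ℕ) : K :=
  ∏ i ∈ Finset.range j, (Nat.fib (n - i) : K)

/-- The Hermite F-polynomial
`H_{n,F}(x) = ∑_{k ≥ 0} ((-a)^k / (2^k F_k!)) n_F^{\underline{2k}} x^{n-2k}`. -/
noncomputable def hermiteF (K : Type*) [Field K] (a : K) (n : ℕ) : Polynomial K :=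
  ∑ k ∈ Finset.range (n + 1),
    (((-a) ^ k / (2 ^ k * ffactK K k)) * ffallK K n (2 * k)) • X ^ (n - 2 * k)

lemma ffallK_eq_zero {K : Type*} [Field K] {n j : ℕ} (h : n < j) : ffallK K n j = 0 := by
  apply Finset.prod_eq_zero (Finset.mem_range.mpr h)
  simp

lemma ffallK_mul_fib (K : Type*) [Field K] (n j : ℕ) :
    ffallK K (n + 1) j * (Nat.fib (n + 1 - j) : K)
      = (Nat.fib (n + 1) : K) * ffallK K n j := by
  cases j with
  | zero => simp [ffallK, mul_comm]
  | succ l =>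
    have h1 : ffallK K (n + 1) (l + 1) = ffallK K n l * (Nat.fib (n + 1) : K) := by
      simp only [ffallK, Finset.prod_range_succ', Nat.succ_sub_succ, Nat.sub_zero]
    rw [h1, Nat.succ_sub_succ]
    simp only [ffallK, Finset.prod_range_succ]
    ring

theorem hermiteF_fderiv {K : Type*} [Field K] [CharZero K] (a : K)
    (D : K[X] →ₗ[K] K[X])
    (hD : ∀ m : ℕ, D (X ^ m) = (Nat.fib m : K) • X ^ (m - 1)) :
    ∀ n : ℕ, 1 ≤ n →
      D (hermiteF K a n) = (Nat.fib n : K) • hermiteF K a (n - 1) := by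
  intro n hn
  obtain ⟨m, rfl⟩ : ∃ m, n = m + 1 := ⟨n - 1, (Nat.succ_pred_eq_of_pos hn).symm⟩
  simp only [hermiteF, map_sum, map_smul, hD, Nat.add_sub_cancel, Finset.smul_sum]
  have hext : ∑ k ∈ Finset.range (m + 1 + 1),
      (Nat.fib (m + 1) : K) •
        ((((-a) ^ k / (2 ^ k * ffactK K k)) * ffallK K m (2 * k)) • (X : K[X]) ^ (m - 2 * k))
      = ∑ k ∈ Finset.range (m + 1),
      (Nat.fib (m + 1) : K) •
        ((((-a) ^ k / (2 ^ k * ffactK K k)) * ffallK K m (2 * k)) • X ^ (m - 2 * k)) := by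
    rw [Finset.sum_range_succ, ffallK_eq_zero (by omega : m < 2 * (m + 1)), mul_zero,
      zero_smul, smul_zero, add_zero]
  rw [← hext]
  refine Finset.sum_congr rfl fun k _ => ?_
  rw [smul_smul, smul_smul, show m + 1 - 2 * k - 1 = m - 2 * k from by omega]
  congr 1
  linear_combination ((-a) ^ k / (2 ^ k * ffactK K k)) * ffallK_mul_fib K m (2 * k)
end
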